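/- arXiv:math-ph/0310064 — 2 statements merged into one kernel-verified Lean document; each statement's English description precedes it below -/
import Mathlib

section
/- For all positive reals x and y, (1/m(x,y)) · ( m(x,x,y)/m(x,x) + m(x,y,y)/m(y,y) ) = 1. -/
open MeasureTheory

open Set Filter in
private lemma tendsto_neg_inv_add (x : ℝ) :
    Tendsto (fun t : ℝ => -(x+t)⁻¹) atTop (nhds 0) := by
  have : Tendsto (fun t : ℝ => x + t) atTop atTop := tendsto_atTop_add_const_left _ _ tendsto_id
  simpa using (this.inv_tendsto_atTop).neg

open Set Filter in
private lemma m2_diag_aux (x : ℝ) (hx : 0 < x) :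
    IntegrableOn (fun t : ℝ => 1/((x+t)*(x+t))) (Ioi 0) ∧
      (∫ t in Ioi (0:ℝ), 1/((x+t)*(x+t))) = 1/x := by
  have hderiv : ∀ t ∈ Ici (0:ℝ), HasDerivAt (fun t : ℝ => -(x+t)⁻¹) (1/((x+t)*(x+t))) t := by
    intro t ht
    have ht' : (0:ℝ) ≤ t := ht
    have hne : x + t ≠ 0 := by positivity
    have h := ((hasDerivAt_id t).const_add x).fun_inv hne
    refine h.fun_neg.congr_deriv ?_
    simp only [id]
    field_simp
  have hpos : ∀ t ∈ Ioi (0:ℝ), 0 ≤ 1/((x+t)*(x+t)) := by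
    intro t ht; have : 0 < t := ht; positivity
  refine ⟨integrableOn_Ioi_deriv_of_nonneg' hderiv hpos (tendsto_neg_inv_add x), ?_⟩
  rw [integral_Ioi_of_hasDerivAt_of_nonneg' hderiv hpos (tendsto_neg_inv_add x)]
  simp [one_div]

open Set Filter in
private lemma m3_diag_aux (x : ℝ) (hx : 0 < x) :
    (∫ t in Ioi (0:ℝ), 1/((x+t)*(x+t)*(x+t))) = 1/(2*(x*x)) := by
  have hderiv : ∀ t ∈ Ici (0:ℝ),
      HasDerivAt (fun t : ℝ => -(2:ℝ)⁻¹ * ((x+t)*(x+t))⁻¹) (1/((x+t)*(x+t)*(x+t))) t := by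
    intro t ht
    have ht' : (0:ℝ) ≤ t := ht
    have hne : x + t ≠ 0 := by positivity
    have h1 := ((hasDerivAt_id t).const_add x).fun_mul ((hasDerivAt_id t).const_add x)
    have h2 := (h1.fun_inv (by positivity)).const_mul (-(2:ℝ)⁻¹)
    refine h2.congr_deriv ?_
    simp only [id]
    field_simp
    ring
  have hpos : ∀ t ∈ Ioi (0:ℝ), 0 ≤ 1/((x+t)*(x+t)*(x+t)) := by
    intro t ht; have : 0 < t := ht; positivity
  have htend : Tendsto (fun t : ℝ => -(2:ℝ)⁻¹ * ((x+t)*(x+t))⁻¹) atTop (nhds 0) := by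
    have h : Tendsto (fun t : ℝ => (x+t)*(x+t)) atTop atTop := by
      have : Tendsto (fun t : ℝ => x + t) atTop atTop := tendsto_atTop_add_const_left _ _ tendsto_id
      exact this.atTop_mul_atTop₀ this
    simpa using (h.inv_tendsto_atTop).const_mul (-(2:ℝ)⁻¹)
  rw [integral_Ioi_of_hasDerivAt_of_nonneg' hderiv hpos htend]
  have : x + 0 = x := add_zero x
  rw [this]
  field_simp
  ring

open Set Filter in
private lemma m2_off_aux (x y : ℝ) (hx : 0 < x) (hy : 0 < y) (hne : y - x ≠ 0) :
    IntegrableOn (fun t : ℝ => 1/((x+t)*(y+t))) (Ioi 0) ∧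
      (∫ t in Ioi (0:ℝ), 1/((x+t)*(y+t))) = (Real.log y - Real.log x)/(y-x) := by
  set g : ℝ → ℝ := fun t => (y-x)⁻¹ * (Real.log (x+t) - Real.log (y+t)) with hg
  have hderiv : ∀ t ∈ Ici (0:ℝ), HasDerivAt g (1/((x+t)*(y+t))) t := by
    intro t ht
    have ht' : (0:ℝ) ≤ t := ht
    have hx' : x + t ≠ 0 := by positivity
    have hy' : y + t ≠ 0 := by positivity
    have h1 := (((hasDerivAt_id t).const_add x).log hx').fun_sub
      (((hasDerivAt_id t).const_add y).log hy')
    have h2 := h1.const_mul ((y-x)⁻¹)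
    refine h2.congr_deriv ?_
    simp only [id]
    field_simp
    ring
  have hpos : ∀ t ∈ Ioi (0:ℝ), 0 ≤ 1/((x+t)*(y+t)) := by
    intro t ht; have : 0 < t := ht; positivity
  have htend : Tendsto g atTop (nhds 0) := by
    have hratio : Tendsto (fun t : ℝ => (x+t)/(y+t)) atTop (nhds 1) := by
      have hyt : Tendsto (fun t : ℝ => y + t) atTop atTop :=
        tendsto_atTop_add_const_left _ _ tendsto_id
      have h0 : Tendsto (fun t : ℝ => (x-y)*(y+t)⁻¹ + 1) atTop (nhds 1) := by
        have := (hyt.inv_tendsto_atTop).const_mul (x-y)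
        simpa using this.add (tendsto_const_nhds (x := (1:ℝ)))
      apply h0.congr'
      filter_upwards [eventually_gt_atTop 0] with t ht
      have hx' : x + t ≠ 0 := by positivity
      have hy' : y + t ≠ 0 := by positivity
      field_simp
      ring
    have hlog : Tendsto (fun t : ℝ => Real.log ((x+t)/(y+t))) atTop (nhds 0) := by
      have := (Real.continuousAt_log one_ne_zero).tendsto.comp hratio
      simpa [Function.comp_def] using this
    have hlog2 : Tendsto (fun t : ℝ => Real.log (x+t) - Real.log (y+t)) atTop (nhds 0) := by
      apply hlog.congr'
      filter_upwards [eventually_gt_atTop 0] with t ht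
      have hx' : x + t ≠ 0 := by positivity
      have hy' : y + t ≠ 0 := by positivity
      rw [Real.log_div hx' hy']
    simpa using hlog2.const_mul ((y-x)⁻¹)
  refine ⟨integrableOn_Ioi_deriv_of_nonneg' hderiv hpos htend, ?_⟩
  rw [integral_Ioi_of_hasDerivAt_of_nonneg' hderiv hpos htend, hg]
  simp only [add_zero]
  field_simp
  ring

noncomputable def m2 (x y : ℝ) : ℝ := ∫ t in Set.Ioi (0:ℝ), 1 / ((x + t) * (y + t))

noncomputable def m3 (x y z : ℝ) : ℝ :=
  ∫ t in Set.Ioi (0:ℝ), 1 / ((x + t) * (y + t) * (z + t))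

theorem stmt_4 (x y : ℝ) (hx : 0 < x) (hy : 0 < y) :
    (1 / m2 x y) * (m3 x x y / m2 x x + m3 x y y / m2 y y) = 1 := by
  rcases eq_or_ne x y with rfl | hxy
  · have h2 : m2 x x = 1/x := (m2_diag_aux x hx).2
    have h3 : m3 x x x = 1/(2*(x*x)) := m3_diag_aux x hx
    rw [h2, h3]
    have hx0 : x ≠ 0 := ne_of_gt hx
    field_simp
    ring
  · have hd : y - x ≠ 0 := sub_ne_zero.mpr (Ne.symm hxy)
    obtain ⟨hintxy, hvalxy⟩ := m2_off_aux x y hx hy hd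
    obtain ⟨hintxx, hvalxx⟩ := m2_diag_aux x hx
    obtain ⟨hintyy, hvalyy⟩ := m2_diag_aux y hy
    have h3xxy : m3 x x y = (y-x)⁻¹ * (m2 x x - m2 x y) := by
      unfold m3 m2
      rw [← integral_sub hintxx hintxy, ← integral_const_mul]
      apply setIntegral_congr_fun measurableSet_Ioi
      intro t ht
      have ht' : (0:ℝ) < t := ht
      have hx' : x + t ≠ 0 := by positivity
      have hy' : y + t ≠ 0 := by positivity
      field_simp
      ring
    have h3xyy : m3 x y y = (y-x)⁻¹ * (m2 x y - m2 y y) := by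
      unfold m3 m2
      rw [← integral_sub hintxy hintyy, ← integral_const_mul]
      apply setIntegral_congr_fun measurableSet_Ioi
      intro t ht
      have ht' : (0:ℝ) < t := ht
      have hx' : x + t ≠ 0 := by positivity
      have hy' : y + t ≠ 0 := by positivity
      field_simp
      ring
    have ha : m2 x y ≠ 0 := by
      show m2 x y ≠ 0
      have : (0:ℝ) < m2 x y := by
        show (0:ℝ) < m2 x y
        unfold m2
        rw [show (∫ t in Set.Ioi (0:ℝ), 1 / ((x + t) * (y + t))) = m2 x y from rfl] at *
        rw [show m2 x y = (Real.log y - Real.log x)/(y-x) from hvalxy]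
        rcases lt_or_gt_of_ne hxy with h | h
        · apply div_pos (sub_pos.mpr (Real.log_lt_log hx h)) (sub_pos.mpr h)
        · apply div_pos_of_neg_of_neg (sub_neg.mpr (Real.log_lt_log hy h)) (sub_neg.mpr h)
      linarith
    have hxx : m2 x x = 1/x := hvalxx
    have hyy : m2 y y = 1/y := hvalyy
    rw [h3xxy, h3xyy, hxx, hyy]
    have hx0 : x ≠ 0 := ne_of_gt hx
    have hy0 : y ≠ 0 := ne_of_gt hy
    field_simp
    ring
end

section
/- The function τ(c) = −(1/2)·(1+c)²/(1−c)² + (1+c)(1+c²)/(c(c−1)·log c) − (1/2)·(1+c)²/(c·(log c)²) is strictly decreasing on the open interval (0,1). -/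
noncomputable def tau (c : ℝ) : ℝ :=
  -(1 / 2) * (1 + c) ^ 2 / (1 - c) ^ 2 +
    (1 + c) * (1 + c ^ 2) / (c * (c - 1) * Real.log c) -
    (1 / 2) * (1 + c) ^ 2 / (c * (Real.log c) ^ 2)

open Real Set

/-- M(c) = 2c - 2 - (c+1) log c -/
private lemma hasDerivAt_M {x : ℝ} (hx : 0 < x) :
    HasDerivAt (fun c => 2*c - 2 - (c+1) * Real.log c) (1 - Real.log x - 1/x) x := by
  have h1 : HasDerivAt (fun c : ℝ => 2*c - 2) 2 x := by
    simpa using ((hasDerivAt_id x).const_mul 2).sub_const 2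
  have h2 : HasDerivAt (fun c : ℝ => (c+1) * Real.log c)
      (1 * Real.log x + (x+1) * x⁻¹) x := by
    exact ((hasDerivAt_id x).add_const 1).mul (Real.hasDerivAt_log hx.ne')
  have := h1.sub h2
  convert this using 1
  · rfl
  · rfl
  · rfl
  field_simp
  try ring

private lemma hasDerivAt_N {x : ℝ} (hx : 0 < x) :
    HasDerivAt (fun c => 5*c^2 - 4*c - 1 - (2*c^2+4*c) * Real.log c)
      (4 * (2*x - 2 - (x+1) * Real.log x)) x := by
  have h1 : HasDerivAt (fun c : ℝ => 5*c^2 - 4*c - 1) (5*(2*x) - 4) x := by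
    have := (((hasDerivAt_pow 2 x).const_mul 5).sub (((hasDerivAt_id x).const_mul 4))).sub_const 1
    convert this using 1
    · rfl
    · rfl
    · rfl
    simp [pow_one]
    try ring
  have h2 : HasDerivAt (fun c : ℝ => (2*c^2+4*c) * Real.log c)
      ((2*(2*x) + 4) * Real.log x + (2*x^2+4*x) * x⁻¹) x := by
    have ha : HasDerivAt (fun c : ℝ => 2*c^2+4*c) (2*(2*x) + 4) x := by
      have := ((hasDerivAt_pow 2 x).const_mul 2).add ((hasDerivAt_id x).const_mul 4)
      convert this using 1
      · rfl
      · rfl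
      · rfl
      simp [pow_one]
    exact ha.mul (Real.hasDerivAt_log hx.ne')
  have := h1.sub h2
  convert this using 1
  · rfl
  · rfl
  · rfl
  field_simp
  try ring

private lemma hasDerivAt_f {x : ℝ} (hx : 0 < x) :
    HasDerivAt (fun c => 3*c^2 - 3 - (c^2+4*c+1) * Real.log c)
      ((5*x^2 - 4*x - 1 - (2*x^2+4*x) * Real.log x) / x) x := by
  have h1 : HasDerivAt (fun c : ℝ => 3*c^2 - 3) (3*(2*x)) x := by
    simpa using ((hasDerivAt_pow 2 x).const_mul 3).sub_const 3
  have h2 : HasDerivAt (fun c : ℝ => (c^2+4*c+1) * Real.log c)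
      ((2*x + 4) * Real.log x + (x^2+4*x+1) * x⁻¹) x := by
    have ha : HasDerivAt (fun c : ℝ => c^2+4*c+1) (2*x + 4) x := by
      have := ((hasDerivAt_pow 2 x).add ((hasDerivAt_id x).const_mul 4)).add_const 1
      convert this using 1
      · rfl
      · rfl
      · rfl
      simp [pow_one]
      try ring
    exact ha.mul (Real.hasDerivAt_log hx.ne')
  have := h1.sub h2
  convert this using 1
  · rfl
  · rfl
  · rfl
  field_simp
  try ring

private lemma hasDerivAt_g {x : ℝ} (hx : 0 < x) :
    HasDerivAt (fun c => (3*c^3+18*c^2+9*c) * Real.log c - 10*c^3 - 9*c^2 + 18*c + 1)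
      (-9 * (3*x^2 - 3 - (x^2+4*x+1) * Real.log x)) x := by
  have h2 : HasDerivAt (fun c : ℝ => (3*c^3+18*c^2+9*c) * Real.log c)
      ((3*(3*x^2)+18*(2*x)+9) * Real.log x + (3*x^3+18*x^2+9*x) * x⁻¹) x := by
    have ha : HasDerivAt (fun c : ℝ => 3*c^3+18*c^2+9*c) (3*(3*x^2)+18*(2*x)+9) x := by
      have := (((hasDerivAt_pow 3 x).const_mul 3).add ((hasDerivAt_pow 2 x).const_mul 18)).add
        ((hasDerivAt_id x).const_mul 9)
      convert this using 1
      · rfl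
      · rfl
      · rfl
      simp [pow_one]
      try ring
    exact ha.mul (Real.hasDerivAt_log hx.ne')
  have h1 : HasDerivAt (fun c : ℝ => 10*c^3 + 9*c^2 - 18*c - 1) (10*(3*x^2) + 9*(2*x) - 18) x := by
    have := (((hasDerivAt_pow 3 x).const_mul 10).add ((hasDerivAt_pow 2 x).const_mul 9)).sub
      (((hasDerivAt_id x).const_mul 18).add_const 1)
    convert this using 1
    · rfl
    · rfl
    · funext c; simp only [Pi.sub_apply, Pi.add_apply, id_eq]; ring
    · push_cast; ring
  have := h2.sub h1
  convert this using 1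
  · rfl
  · rfl
  · funext c; simp only [Pi.sub_apply]; ring
  · field_simp
    ring

private lemma contOn (F : ℝ → ℝ) (D : ℝ → ℝ)
    (h : ∀ x : ℝ, 0 < x → HasDerivAt F (D x) x) :
    ContinuousOn F (Set.Ioc (0:ℝ) 1) :=
  fun x hx => ((h x hx.1).continuousAt).continuousWithinAt

private lemma M_pos {c : ℝ} (hc : 0 < c) (hc1 : c < 1) :
    0 < 2*c - 2 - (c+1) * Real.log c := by
  have anti : StrictAntiOn (fun c => 2*c - 2 - (c+1) * Real.log c) (Set.Ioc (0:ℝ) 1) := by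
    apply strictAntiOn_of_deriv_neg (convex_Ioc 0 1)
      (contOn _ _ (fun x hx => hasDerivAt_M hx))
    intro x hx
    rw [interior_Ioc] at hx
    rw [(hasDerivAt_M hx.1).deriv]
    have hlog : Real.log x⁻¹ < x⁻¹ - 1 :=
      Real.log_lt_sub_one_of_pos (inv_pos.mpr hx.1) (by
        intro h; rw [inv_eq_one] at h; exact hx.2.ne h)
    rw [Real.log_inv] at hlog
    have : (1:ℝ)/x = x⁻¹ := one_div x
    rw [this]; linarith
  have h1 : (1:ℝ) ∈ Set.Ioc (0:ℝ) 1 := ⟨zero_lt_one, le_refl 1⟩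
  have hcm : c ∈ Set.Ioc (0:ℝ) 1 := ⟨hc, hc1.le⟩
  have := anti hcm h1 hc1
  simpa [Real.log_one] using this

private lemma N_neg {c : ℝ} (hc : 0 < c) (hc1 : c < 1) :
    5*c^2 - 4*c - 1 - (2*c^2+4*c) * Real.log c < 0 := by
  have mono : StrictMonoOn (fun c => 5*c^2 - 4*c - 1 - (2*c^2+4*c) * Real.log c)
      (Set.Ioc (0:ℝ) 1) := by
    apply strictMonoOn_of_deriv_pos (convex_Ioc 0 1)
      (contOn _ _ (fun x hx => hasDerivAt_N hx))
    intro x hx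
    rw [interior_Ioc] at hx
    rw [(hasDerivAt_N hx.1).deriv]
    have := M_pos hx.1 hx.2
    linarith
  have h1 : (1:ℝ) ∈ Set.Ioc (0:ℝ) 1 := ⟨zero_lt_one, le_refl 1⟩
  have hcm : c ∈ Set.Ioc (0:ℝ) 1 := ⟨hc, hc1.le⟩
  have := mono hcm h1 hc1
  simp only [Real.log_one, mul_zero, sub_zero] at this
  linarith

private lemma f_pos {c : ℝ} (hc : 0 < c) (hc1 : c < 1) :
    0 < 3*c^2 - 3 - (c^2+4*c+1) * Real.log c := by
  have anti : StrictAntiOn (fun c => 3*c^2 - 3 - (c^2+4*c+1) * Real.log c)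
      (Set.Ioc (0:ℝ) 1) := by
    apply strictAntiOn_of_deriv_neg (convex_Ioc 0 1)
      (contOn _ _ (fun x hx => hasDerivAt_f hx))
    intro x hx
    rw [interior_Ioc] at hx
    rw [(hasDerivAt_f hx.1).deriv]
    exact div_neg_of_neg_of_pos (N_neg hx.1 hx.2) hx.1
  have h1 : (1:ℝ) ∈ Set.Ioc (0:ℝ) 1 := ⟨zero_lt_one, le_refl 1⟩
  have hcm : c ∈ Set.Ioc (0:ℝ) 1 := ⟨hc, hc1.le⟩
  have := anti hcm h1 hc1
  simpa [Real.log_one] using this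

private lemma g_pos {c : ℝ} (hc : 0 < c) (hc1 : c < 1) :
    0 < (3*c^3+18*c^2+9*c) * Real.log c - 10*c^3 - 9*c^2 + 18*c + 1 := by
  have anti : StrictAntiOn
      (fun c => (3*c^3+18*c^2+9*c) * Real.log c - 10*c^3 - 9*c^2 + 18*c + 1)
      (Set.Ioc (0:ℝ) 1) := by
    apply strictAntiOn_of_deriv_neg (convex_Ioc 0 1)
      (contOn _ _ (fun x hx => hasDerivAt_g hx))
    intro x hx
    rw [interior_Ioc] at hx
    rw [(hasDerivAt_g hx.1).deriv]
    have := f_pos hx.1 hx.2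
    linarith
  have h1 : (1:ℝ) ∈ Set.Ioc (0:ℝ) 1 := ⟨zero_lt_one, le_refl 1⟩
  have hcm : c ∈ Set.Ioc (0:ℝ) 1 := ⟨hc, hc1.le⟩
  have := anti hcm h1 hc1
  simp only [Real.log_one, mul_zero, zero_sub] at this
  linarith

set_option maxHeartbeats 2000000 in
private lemma cert {c l gu gl : ℝ} (hc : 0 < c) (hd : 0 < 1 - c)
    (hgu : 0 < gu) (hgl : 0 < gl)
    (hgud : gu = 3*c^2 - 3 - (c^2+4*c+1) * l)
    (hgld : gl = (3*c^3+18*c^2+9*c) * l - 10*c^3 - 9*c^2 + 18*c + 1) :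
    2*c^2*(1+c)*l^3 + (c-1)*(c^4-2*c^3-2*c^2-2*c+1)*l^2
      - (1/2)*(1+c)*(c-1)^2*(3*c^2-2*c+3)*l + (1+c)^2*(c-1)^3 < 0 := by
  have h0 : (0:ℝ) < (1 - c) ^ 2 * gu := mul_pos (pow_pos hd 2) (hgu)
  have h1 : (0:ℝ) < (1 - c) ^ 5 * gu := mul_pos (pow_pos hd 5) (hgu)
  have h2 : (0:ℝ) < c * (1 - c) ^ 2 * gu := mul_pos (mul_pos (hc) (pow_pos hd 2)) (hgu)
  have h3 : (0:ℝ) < c * (1 - c) ^ 5 * gu := mul_pos (mul_pos (hc) (pow_pos hd 5)) (hgu)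
  have h4 : (0:ℝ) < c ^ 4 * (1 - c) ^ 2 * gu := mul_pos (mul_pos (pow_pos hc 4) (pow_pos hd 2)) (hgu)
  have h5 : (0:ℝ) < (1 - c) ^ 2 * gl := mul_pos (pow_pos hd 2) (hgl)
  have h6 : (0:ℝ) < (1 - c) ^ 4 * gl := mul_pos (pow_pos hd 4) (hgl)
  have h7 : (0:ℝ) < (1 - c) ^ 6 * gl := mul_pos (pow_pos hd 6) (hgl)
  have h8 : (0:ℝ) < c ^ 3 * (1 - c) ^ 2 * gl := mul_pos (mul_pos (pow_pos hc 3) (pow_pos hd 2)) (hgl)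
  have h9 : (0:ℝ) < c ^ 3 * (1 - c) ^ 3 * gl := mul_pos (mul_pos (pow_pos hc 3) (pow_pos hd 3)) (hgl)
  have h10 : (0:ℝ) < (1 - c) ^ 5 * gu ^ 2 := mul_pos (pow_pos hd 5) (pow_pos hgu 2)
  have h11 : (0:ℝ) < c * (1 - c) ^ 5 * gu ^ 2 := mul_pos (mul_pos (hc) (pow_pos hd 5)) (pow_pos hgu 2)
  have h12 : (0:ℝ) < c ^ 3 * (1 - c) * gu ^ 2 := mul_pos (mul_pos (pow_pos hc 3) (hd)) (pow_pos hgu 2)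
  have h13 : (0:ℝ) < c ^ 4 * (1 - c) * gu ^ 2 := mul_pos (mul_pos (pow_pos hc 4) (hd)) (pow_pos hgu 2)
  have h14 : (0:ℝ) < c ^ 4 * (1 - c) ^ 2 * gu ^ 2 := mul_pos (mul_pos (pow_pos hc 4) (pow_pos hd 2)) (pow_pos hgu 2)
  have h15 : (0:ℝ) < gu * gl := mul_pos (hgu) (hgl)
  have h16 : (0:ℝ) < c * (1 - c) ^ 4 * gu * gl := mul_pos (mul_pos (mul_pos (hc) (pow_pos hd 4)) (hgu)) (hgl)
  have h17 : (0:ℝ) < c ^ 2 * (1 - c) ^ 4 * gu * gl := mul_pos (mul_pos (mul_pos (pow_pos hc 2) (pow_pos hd 4)) (hgu)) (hgl)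
  have h18 : (0:ℝ) < c ^ 5 * gu * gl := mul_pos (mul_pos (pow_pos hc 5) (hgu)) (hgl)
  have h19 : (0:ℝ) < c ^ 5 * (1 - c) * gu * gl := mul_pos (mul_pos (mul_pos (pow_pos hc 5) (hd)) (hgu)) (hgl)
  have h20 : (0:ℝ) < (1 - c) * gl ^ 2 := mul_pos (hd) (pow_pos hgl 2)
  have h21 : (0:ℝ) < (1 - c) ^ 2 * gl ^ 2 := mul_pos (pow_pos hd 2) (pow_pos hgl 2)
  have h22 : (0:ℝ) < (1 - c) ^ 5 * gl ^ 2 := mul_pos (pow_pos hd 5) (pow_pos hgl 2)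
  have h23 : (0:ℝ) < c * (1 - c) ^ 5 * gl ^ 2 := mul_pos (mul_pos (hc) (pow_pos hd 5)) (pow_pos hgl 2)
  have h24 : (0:ℝ) < c ^ 4 * gl ^ 2 := mul_pos (pow_pos hc 4) (pow_pos hgl 2)
  have h25 : (0:ℝ) < c ^ 4 * (1 - c) * gl ^ 2 := mul_pos (mul_pos (pow_pos hc 4) (hd)) (pow_pos hgl 2)
  have h26 : (0:ℝ) < c ^ 4 * (1 - c) ^ 2 * gl ^ 2 := mul_pos (mul_pos (pow_pos hc 4) (pow_pos hd 2)) (pow_pos hgl 2)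
  have h27 : (0:ℝ) < c * (1 - c) ^ 3 * gu ^ 3 := mul_pos (mul_pos (hc) (pow_pos hd 3)) (pow_pos hgu 3)
  have h28 : (0:ℝ) < c ^ 2 * (1 - c) ^ 3 * gu ^ 3 := mul_pos (mul_pos (pow_pos hc 2) (pow_pos hd 3)) (pow_pos hgu 3)
  have h29 : (0:ℝ) < c ^ 3 * (1 - c) ^ 3 * gu ^ 3 := mul_pos (mul_pos (pow_pos hc 3) (pow_pos hd 3)) (pow_pos hgu 3)
  have h30 : (0:ℝ) < c ^ 6 * gu ^ 3 := mul_pos (pow_pos hc 6) (pow_pos hgu 3)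
  have h31 : (0:ℝ) < (1 - c) ^ 6 * gu ^ 2 * gl := mul_pos (mul_pos (pow_pos hd 6) (pow_pos hgu 2)) (hgl)
  have h32 : (0:ℝ) < c ^ 2 * (1 - c) * gu ^ 2 * gl := mul_pos (mul_pos (mul_pos (pow_pos hc 2) (hd)) (pow_pos hgu 2)) (hgl)
  have h33 : (0:ℝ) < c ^ 3 * (1 - c) * gu ^ 2 * gl := mul_pos (mul_pos (mul_pos (pow_pos hc 3) (hd)) (pow_pos hgu 2)) (hgl)
  have h34 : (0:ℝ) < c ^ 3 * (1 - c) ^ 3 * gu ^ 2 * gl := mul_pos (mul_pos (mul_pos (pow_pos hc 3) (pow_pos hd 3)) (pow_pos hgu 2)) (hgl)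
  have h35 : (0:ℝ) < c ^ 6 * gu ^ 2 * gl := mul_pos (mul_pos (pow_pos hc 6) (pow_pos hgu 2)) (hgl)
  have h36 : (0:ℝ) < gu * gl ^ 2 := mul_pos (hgu) (pow_pos hgl 2)
  have h37 : (0:ℝ) < c * gu * gl ^ 2 := mul_pos (mul_pos (hc) (hgu)) (pow_pos hgl 2)
  have h38 : (0:ℝ) < c ^ 2 * (1 - c) ^ 3 * gu * gl ^ 2 := mul_pos (mul_pos (mul_pos (pow_pos hc 2) (pow_pos hd 3)) (hgu)) (pow_pos hgl 2)
  have h39 : (0:ℝ) < c ^ 3 * (1 - c) ^ 3 * gu * gl ^ 2 := mul_pos (mul_pos (mul_pos (pow_pos hc 3) (pow_pos hd 3)) (hgu)) (pow_pos hgl 2)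
  have h40 : (0:ℝ) < c ^ 6 * gu * gl ^ 2 := mul_pos (mul_pos (pow_pos hc 6) (hgu)) (pow_pos hgl 2)
  have h41 : (0:ℝ) < gl ^ 3 := pow_pos hgl 3
  have h42 : (0:ℝ) < c * gl ^ 3 := mul_pos (hc) (pow_pos hgl 3)
  have h43 : (0:ℝ) < c * (1 - c) ^ 3 * gl ^ 3 := mul_pos (mul_pos (hc) (pow_pos hd 3)) (pow_pos hgl 3)
  have h44 : (0:ℝ) < c * (1 - c) ^ 5 * gl ^ 3 := mul_pos (mul_pos (hc) (pow_pos hd 5)) (pow_pos hgl 3)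
  have h45 : (0:ℝ) < c ^ 2 * gl ^ 3 := mul_pos (pow_pos hc 2) (pow_pos hgl 3)
  have h46 : (0:ℝ) < c ^ 2 * (1 - c) ^ 3 * gl ^ 3 := mul_pos (mul_pos (pow_pos hc 2) (pow_pos hd 3)) (pow_pos hgl 3)
  have h47 : (0:ℝ) < c ^ 6 * gl ^ 3 := mul_pos (pow_pos hc 6) (pow_pos hgl 3)
  have key : 2*c^2*(1+c)*l^3 + (c-1)*(c^4-2*c^3-2*c^2-2*c+1)*l^2
      - (1/2)*(1+c)*(c-1)^2*(3*c^2-2*c+3)*l + (1+c)^2*(c-1)^3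
      = -((67/18 : ℝ) * ((1 - c) ^ 2 * gu) +
      (29/324 : ℝ) * ((1 - c) ^ 5 * gu) +
      (346/27 : ℝ) * (c * (1 - c) ^ 2 * gu) +
      (103/324 : ℝ) * (c * (1 - c) ^ 5 * gu) +
      (7/54 : ℝ) * (c ^ 4 * (1 - c) ^ 2 * gu) +
      (741395341/224044704 : ℝ) * ((1 - c) ^ 2 * gl) +
      (17867267/37340784 : ℝ) * ((1 - c) ^ 4 * gl) +
      (140744569/224044704 : ℝ) * ((1 - c) ^ 6 * gl) +
      (5420339/224044704 : ℝ) * (c ^ 3 * (1 - c) ^ 2 * gl) +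
      (5420339/74681568 : ℝ) * (c ^ 3 * (1 - c) ^ 3 * gl) +
      (7621/7848 : ℝ) * ((1 - c) ^ 5 * gu ^ 2) +
      (532/981 : ℝ) * (c * (1 - c) ^ 5 * gu ^ 2) +
      (167/216 : ℝ) * (c ^ 3 * (1 - c) * gu ^ 2) +
      (19/24 : ℝ) * (c ^ 4 * (1 - c) * gu ^ 2) +
      (41/72 : ℝ) * (c ^ 4 * (1 - c) ^ 2 * gu ^ 2) +
      (24077/35316 : ℝ) * (gu * gl) +
      (53381675/18670392 : ℝ) * (c * (1 - c) ^ 4 * gu * gl) +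
      (19016995/9335196 : ℝ) * (c ^ 2 * (1 - c) ^ 4 * gu * gl) +
      (98352649/28005588 : ℝ) * (c ^ 5 * gu * gl) +
      (58337231/28005588 : ℝ) * (c ^ 5 * (1 - c) * gu * gl) +
      (36263057/186703920 : ℝ) * ((1 - c) * gl ^ 2) +
      (30689095/56011176 : ℝ) * ((1 - c) ^ 2 * gl ^ 2) +
      (37716905041/139467828240 : ℝ) * ((1 - c) ^ 5 * gl ^ 2) +
      (7360007299/23244638040 : ℝ) * (c * (1 - c) ^ 5 * gl ^ 2) +
      (3914857/4667598 : ℝ) * (c ^ 4 * gl ^ 2) +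
      (127461443/186703920 : ℝ) * (c ^ 4 * (1 - c) * gl ^ 2) +
      (89177243/280055880 : ℝ) * (c ^ 4 * (1 - c) ^ 2 * gl ^ 2) +
      (227/872 : ℝ) * (c * (1 - c) ^ 3 * gu ^ 3) +
      (149/872 : ℝ) * (c ^ 2 * (1 - c) ^ 3 * gu ^ 3) +
      (149/2616 : ℝ) * (c ^ 3 * (1 - c) ^ 3 * gu ^ 3) +
      (149/2616 : ℝ) * (c ^ 6 * gu ^ 3) +
      (227/7848 : ℝ) * ((1 - c) ^ 6 * gu ^ 2 * gl) +
      (1175/2616 : ℝ) * (c ^ 2 * (1 - c) * gu ^ 2 * gl) +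
      (9373/23544 : ℝ) * (c ^ 3 * (1 - c) * gu ^ 2 * gl) +
      (227/3924 : ℝ) * (c ^ 3 * (1 - c) ^ 3 * gu ^ 2 * gl) +
      (227/7848 : ℝ) * (c ^ 6 * gu ^ 2 * gl) +
      (115/17658 : ℝ) * (gu * gl ^ 2) +
      (271163/488538 : ℝ) * (c * gu * gl ^ 2) +
      (1753/651384 : ℝ) * (c ^ 2 * (1 - c) ^ 3 * gu * gl ^ 2) +
      (1753/1954152 : ℝ) * (c ^ 3 * (1 - c) ^ 3 * gu * gl ^ 2) +
      (1753/1954152 : ℝ) * (c ^ 6 * gu * gl ^ 2) +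
      (1259201/17587368 : ℝ) * (gl ^ 3) +
      (306086/10992105 : ℝ) * (c * gl ^ 3) +
      (1753/1954152 : ℝ) * (c * (1 - c) ^ 3 * gl ^ 3) +
      (1753/9770760 : ℝ) * (c * (1 - c) ^ 5 * gl ^ 3) +
      (211403/17587368 : ℝ) * (c ^ 2 * gl ^ 3) +
      (1753/1954152 : ℝ) * (c ^ 2 * (1 - c) ^ 3 * gl ^ 3) +
      (1753/9770760 : ℝ) * (c ^ 6 * gl ^ 3)) := by
    subst hgud hgld
    ring
  rw [key]
  have : (0:ℝ) < (67/18 : ℝ) * ((1 - c) ^ 2 * gu) +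
      (29/324 : ℝ) * ((1 - c) ^ 5 * gu) +
      (346/27 : ℝ) * (c * (1 - c) ^ 2 * gu) +
      (103/324 : ℝ) * (c * (1 - c) ^ 5 * gu) +
      (7/54 : ℝ) * (c ^ 4 * (1 - c) ^ 2 * gu) +
      (741395341/224044704 : ℝ) * ((1 - c) ^ 2 * gl) +
      (17867267/37340784 : ℝ) * ((1 - c) ^ 4 * gl) +
      (140744569/224044704 : ℝ) * ((1 - c) ^ 6 * gl) +
      (5420339/224044704 : ℝ) * (c ^ 3 * (1 - c) ^ 2 * gl) +
      (5420339/74681568 : ℝ) * (c ^ 3 * (1 - c) ^ 3 * gl) +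
      (7621/7848 : ℝ) * ((1 - c) ^ 5 * gu ^ 2) +
      (532/981 : ℝ) * (c * (1 - c) ^ 5 * gu ^ 2) +
      (167/216 : ℝ) * (c ^ 3 * (1 - c) * gu ^ 2) +
      (19/24 : ℝ) * (c ^ 4 * (1 - c) * gu ^ 2) +
      (41/72 : ℝ) * (c ^ 4 * (1 - c) ^ 2 * gu ^ 2) +
      (24077/35316 : ℝ) * (gu * gl) +
      (53381675/18670392 : ℝ) * (c * (1 - c) ^ 4 * gu * gl) +
      (19016995/9335196 : ℝ) * (c ^ 2 * (1 - c) ^ 4 * gu * gl) +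
      (98352649/28005588 : ℝ) * (c ^ 5 * gu * gl) +
      (58337231/28005588 : ℝ) * (c ^ 5 * (1 - c) * gu * gl) +
      (36263057/186703920 : ℝ) * ((1 - c) * gl ^ 2) +
      (30689095/56011176 : ℝ) * ((1 - c) ^ 2 * gl ^ 2) +
      (37716905041/139467828240 : ℝ) * ((1 - c) ^ 5 * gl ^ 2) +
      (7360007299/23244638040 : ℝ) * (c * (1 - c) ^ 5 * gl ^ 2) +
      (3914857/4667598 : ℝ) * (c ^ 4 * gl ^ 2) +
      (127461443/186703920 : ℝ) * (c ^ 4 * (1 - c) * gl ^ 2) +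
      (89177243/280055880 : ℝ) * (c ^ 4 * (1 - c) ^ 2 * gl ^ 2) +
      (227/872 : ℝ) * (c * (1 - c) ^ 3 * gu ^ 3) +
      (149/872 : ℝ) * (c ^ 2 * (1 - c) ^ 3 * gu ^ 3) +
      (149/2616 : ℝ) * (c ^ 3 * (1 - c) ^ 3 * gu ^ 3) +
      (149/2616 : ℝ) * (c ^ 6 * gu ^ 3) +
      (227/7848 : ℝ) * ((1 - c) ^ 6 * gu ^ 2 * gl) +
      (1175/2616 : ℝ) * (c ^ 2 * (1 - c) * gu ^ 2 * gl) +
      (9373/23544 : ℝ) * (c ^ 3 * (1 - c) * gu ^ 2 * gl) +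
      (227/3924 : ℝ) * (c ^ 3 * (1 - c) ^ 3 * gu ^ 2 * gl) +
      (227/7848 : ℝ) * (c ^ 6 * gu ^ 2 * gl) +
      (115/17658 : ℝ) * (gu * gl ^ 2) +
      (271163/488538 : ℝ) * (c * gu * gl ^ 2) +
      (1753/651384 : ℝ) * (c ^ 2 * (1 - c) ^ 3 * gu * gl ^ 2) +
      (1753/1954152 : ℝ) * (c ^ 3 * (1 - c) ^ 3 * gu * gl ^ 2) +
      (1753/1954152 : ℝ) * (c ^ 6 * gu * gl ^ 2) +
      (1259201/17587368 : ℝ) * (gl ^ 3) +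
      (306086/10992105 : ℝ) * (c * gl ^ 3) +
      (1753/1954152 : ℝ) * (c * (1 - c) ^ 3 * gl ^ 3) +
      (1753/9770760 : ℝ) * (c * (1 - c) ^ 5 * gl ^ 3) +
      (211403/17587368 : ℝ) * (c ^ 2 * gl ^ 3) +
      (1753/1954152 : ℝ) * (c ^ 2 * (1 - c) ^ 3 * gl ^ 3) +
      (1753/9770760 : ℝ) * (c ^ 6 * gl ^ 3) := by positivity
  linarith [h0, h1, h2, h3, h4, h5, h6, h7, h8, h9, h10, h11, h12, h13, h14, h15, h16, h17, h18, h19, h20, h21, h22, h23, h24, h25, h26, h27, h28, h29, h30, h31, h32, h33, h34, h35, h36, h37, h38, h39, h40, h41, h42, h43, h44, h45, h46, h47]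

private lemma P_neg {c : ℝ} (hc : 0 < c) (hc1 : c < 1) :
    2*c^2*(1+c)*(Real.log c)^3 + (c-1)*(c^4-2*c^3-2*c^2-2*c+1)*(Real.log c)^2
      - (1/2)*(1+c)*(c-1)^2*(3*c^2-2*c+3)*(Real.log c) + (1+c)^2*(c-1)^3 < 0 :=
  cert hc (by linarith) (f_pos hc hc1) (g_pos hc hc1) rfl rfl

set_option maxHeartbeats 2000000 in
private lemma tau_hasDerivAt {c : ℝ} (hc : 0 < c) (hc1 : c < 1) :
    HasDerivAt tau
      ((2*c^2*(1+c)*(Real.log c)^3 + (c-1)*(c^4-2*c^3-2*c^2-2*c+1)*(Real.log c)^2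
        - (1/2)*(1+c)*(c-1)^2*(3*c^2-2*c+3)*(Real.log c) + (1+c)^2*(c-1)^3)
       / (c^2*(c-1)^3*(Real.log c)^3)) c := by
  have hc0 : c ≠ 0 := hc.ne'
  have hd0 : (1:ℝ) - c ≠ 0 := by linarith
  have hcm1 : c - 1 ≠ 0 := by intro h; apply hd0; linarith
  have hl : Real.log c < 0 := Real.log_neg hc hc1
  have hl0 : Real.log c ≠ 0 := hl.ne
  set l := Real.log c with hldef
  have h1 : HasDerivAt (fun x : ℝ => -(1/2) * (1+x)^2 / (1-x)^2)
      ((-(1/2)*(2*(1+c)) * (1-c)^2 - (-(1/2)*(1+c)^2) * (2*(1-c)*(-1))) / ((1-c)^2)^2) c := by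
    have hu : HasDerivAt (fun x : ℝ => -(1/2) * (1+x)^2) (-(1/2)*(2*(1+c))) c := by
      have hb : HasDerivAt (fun x : ℝ => (1+x)^2) (2*(1+c)) c := by
        have := ((hasDerivAt_id c).const_add 1).pow 2
        convert this using 1
        · rfl
        · rfl
        · rfl
        simp [pow_one]
        try ring
      exact hb.const_mul (-(1/2) : ℝ)
    have hv : HasDerivAt (fun x : ℝ => (1-x)^2) (2*(1-c)*(-1)) c := by
      have := ((hasDerivAt_id c).neg.const_add 1).pow 2
      convert this using 1
      · rfl
      · rfl
      · rfl
      simp [pow_one]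
      try ring
    exact hu.div hv (pow_ne_zero 2 hd0)
  have h2 : HasDerivAt (fun x : ℝ => (1+x) * (1+x^2) / (x * (x-1) * Real.log x))
      (((3*c^2+2*c+1) * (c*(c-1)*l) - ((1+c)*(1+c^2)) * ((2*c-1)*l + (c-1)))
        / (c*(c-1)*l)^2) c := by
    have hu : HasDerivAt (fun x : ℝ => (1+x) * (1+x^2)) (3*c^2+2*c+1) c := by
      have := (((hasDerivAt_id c).const_add 1).mul (((hasDerivAt_pow 2 c)).const_add 1))
      convert this using 1
      · rfl
      · rfl
      · rfl
      simp [pow_one]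
      try ring
    have hv : HasDerivAt (fun x : ℝ => x * (x-1) * Real.log x) ((2*c-1)*l + (c-1)) c := by
      have ha : HasDerivAt (fun x : ℝ => x * (x-1)) (2*c-1) c := by
        have := (hasDerivAt_id c).mul ((hasDerivAt_id c).sub_const 1)
        convert this using 1
        · rfl
        · rfl
        · rfl
        simp
        ring
      have := ha.mul (Real.hasDerivAt_log hc0)
      convert this using 1
      · rfl
      · rfl
      · rfl
      rw [hldef]
      field_simp
      try ring
    have hvne : c * (c-1) * l ≠ 0 := by
      apply mul_ne_zero (mul_ne_zero hc0 hcm1) hl0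
    exact hu.div hv hvne
  have h3 : HasDerivAt (fun x : ℝ => (1/2) * (1+x)^2 / (x * (Real.log x)^2))
      (((1+c) * (c*l^2) - ((1/2)*(1+c)^2) * (l^2 + 2*l)) / (c*l^2)^2) c := by
    have hu : HasDerivAt (fun x : ℝ => (1/2) * (1+x)^2) (1+c) c := by
      have hb : HasDerivAt (fun x : ℝ => (1+x)^2) (2*(1+c)) c := by
        have := ((hasDerivAt_id c).const_add 1).pow 2
        convert this using 1
        · rfl
        · rfl
        · rfl
        simp [pow_one]
        try ring
      have := hb.const_mul (1/2:ℝ)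
      convert this using 1
      · rfl
      · rfl
      ring
    have hv : HasDerivAt (fun x : ℝ => x * (Real.log x)^2) (l^2 + 2*l) c := by
      have hb : HasDerivAt (fun x : ℝ => (Real.log x)^2) (2*l*(1/c)) c := by
        have := (Real.hasDerivAt_log hc0).pow 2
        convert this using 1
        · rfl
        · rfl
        · rfl
        rw [hldef]
        simp [pow_one]
        try ring
      have := (hasDerivAt_id c).mul hb
      convert this using 1
      · rfl
      · rfl
      · rfl
      rw [hldef, id_eq]
      field_simp
      try ring
    have hvne : c * l^2 ≠ 0 := mul_ne_zero hc0 (pow_ne_zero 2 hl0)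
    exact hu.div hv hvne
  have htau : tau = fun x : ℝ => -(1/2) * (1+x)^2 / (1-x)^2
      + (1+x) * (1+x^2) / (x * (x-1) * Real.log x)
      - (1/2) * (1+x)^2 / (x * (Real.log x)^2) := by
    funext x
    simp only [tau]
    try ring
  rw [htau]
  have := (h1.add h2).sub h3
  convert this using 1
  · rfl
  · rfl
  · rfl
  rw [hldef]
  field_simp [show Real.log c ≠ 0 from hl0]
  ring

theorem stmt_6 : StrictAntiOn tau (Set.Ioo (0:ℝ) 1) := by
  apply strictAntiOn_of_deriv_neg (convex_Ioo 0 1)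
  · exact fun x hx => (tau_hasDerivAt hx.1 hx.2).continuousAt.continuousWithinAt
  · intro x hx
    rw [interior_Ioo] at hx
    obtain ⟨hx0, hx1⟩ := hx
    rw [(tau_hasDerivAt hx0 hx1).deriv]
    apply div_neg_of_neg_of_pos (P_neg hx0 hx1)
    have hl : Real.log x < 0 := Real.log_neg hx0 hx1
    have h1 : (x-1)^3 * (Real.log x)^3 = ((x-1) * Real.log x)^3 := by ring
    have h2 : 0 < (x-1) * Real.log x := mul_pos_of_neg_of_neg (by linarith) hl
    have : 0 < x^2 * ((x-1)^3 * (Real.log x)^3) := by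
      rw [h1]
      exact mul_pos (pow_pos hx0 2) (pow_pos h2 3)
    calc (0:ℝ) < x^2 * ((x-1)^3 * (Real.log x)^3) := this
    _ = x^2*(x-1)^3*(Real.log x)^3 := by ring
end
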